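/- Let T be an ℓ×t real matrix with all off-diagonal entries nonpositive (entries T_{ij} with i ≠ j, where diagonal means positions (i,i) for i ≤ min(ℓ,t)) and all column sums nonnegative. Then Gaussian elimination produces a factorization T' = Y·T where Y ∈ R^{ℓ×ℓ} has all entries nonnegative, T' is upper triangular with diagonal entries equal to 0 or 1, and all off-diagonal entries of T' are nonpositive. Furthermore, if T_{ik} < 0 for some k ∈ [t] and i ∈ [k+1, ℓ], then T'_{kk} = 1. -/

import Mathlib

/-- Lemma (Gaussian elimination for `Z₊`-matrices): for an `ℓ × t` matrix `T` with all
off-diagonal entries nonpositive and all column sums nonnegative, Gaussian elimination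
yields `T' = Y * T` where `Y` is entrywise nonnegative, `T'` is upper triangular with
diagonal entries `0` or `1` and nonpositive off-diagonal entries; moreover, if
`T i k < 0` for some `k < i`, then `T' k k = 1`. -/
theorem stmt_7 (l t : ℕ) (T : Matrix (Fin l) (Fin t) ℝ)
    (hoff : ∀ (i : Fin l) (j : Fin t), (i : ℕ) ≠ (j : ℕ) → T i j ≤ 0)
    (hcol : ∀ j, 0 ≤ ∑ i, T i j) :
    ∃ (Y : Matrix (Fin l) (Fin l) ℝ) (T' : Matrix (Fin l) (Fin t) ℝ),
      T' = Y * T ∧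
      (∀ i j, 0 ≤ Y i j) ∧
      (∀ (i : Fin l) (j : Fin t), (j : ℕ) < (i : ℕ) → T' i j = 0) ∧
      (∀ k (hk : k < l) (hk' : k < t),
        T' ⟨k, hk⟩ ⟨k, hk'⟩ = 0 ∨ T' ⟨k, hk⟩ ⟨k, hk'⟩ = 1) ∧
      (∀ (i : Fin l) (j : Fin t), (i : ℕ) ≠ (j : ℕ) → T' i j ≤ 0) ∧
      (∀ (k : ℕ) (i : Fin l) (hk' : k < t), k < (i : ℕ) → T i ⟨k, hk'⟩ < 0 →
        ∀ hk : k < l, T' ⟨k, hk⟩ ⟨k, hk'⟩ = 1) := by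
  suffices h : ∀ k, k ≤ min l t → ∃ (Y : Matrix (Fin l) (Fin l) ℝ)
      (S : Matrix (Fin l) (Fin t) ℝ),
      S = Y * T ∧
      (∀ i j, 0 ≤ Y i j) ∧
      (∀ (i : Fin l) (j : Fin t), (j : ℕ) < k → (j : ℕ) < (i : ℕ) → S i j = 0) ∧
      (∀ (i : Fin l) (j : Fin t), (i : ℕ) ≠ (j : ℕ) → S i j ≤ 0) ∧
      (∀ j, 0 ≤ ∑ i ∈ Finset.univ.filter (fun i : Fin l => k ≤ (i : ℕ)), S i j) ∧
      (∀ (i : Fin l) (j : Fin t), k ≤ (j : ℕ) → (j : ℕ) < (i : ℕ) → S i j ≤ T i j) ∧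
      (∀ m, m < k → ∀ (hml : m < l) (hmt : m < t),
        S ⟨m, hml⟩ ⟨m, hmt⟩ = 0 ∨ S ⟨m, hml⟩ ⟨m, hmt⟩ = 1) ∧
      (∀ m, m < k → ∀ (i : Fin l) (hmt : m < t), m < (i : ℕ) → T i ⟨m, hmt⟩ < 0 →
        ∀ hml : m < l, S ⟨m, hml⟩ ⟨m, hmt⟩ = 1) by
    obtain ⟨Y, S, hYS, hY, hz, ho, -, -, hd, h1⟩ := h (min l t) le_rfl
    refine ⟨Y, S, hYS, hY, ?_, ?_, ho, ?_⟩
    · intro i j hji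
      exact hz i j (lt_min (hji.trans i.isLt) j.isLt) hji
    · intro k hk hk'
      exact hd k (lt_min hk hk') hk hk'
    · intro k i hk' hki hT hk
      exact h1 k (lt_min (hki.trans i.isLt) hk') i hk' hki hT hk
  intro k
  induction k with
  | zero =>
    intro _
    refine ⟨1, T, (Matrix.one_mul T).symm, ?_, ?_, hoff, ?_, ?_, ?_, ?_⟩
    · intro i j
      by_cases hij : i = j <;> simp [Matrix.one_apply, hij]
    · intro i j hj; omega
    · intro j; simpa using hcol j
    · intro i j _ _; exact le_rfl
    · intro m hm; omega
    · intro m hm; omega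
  | succ k ih =>
    intro hk1
    have hkl : k < l := lt_of_lt_of_le (Nat.lt_succ_self k) (hk1.trans (min_le_left l t))
    have hkt : k < t := lt_of_lt_of_le (Nat.lt_succ_self k) (hk1.trans (min_le_right l t))
    obtain ⟨Y, S, hYS, hY, hz, ho, hs, hT, hd, h1⟩ := ih (le_of_lt hk1)
    set kl : Fin l := ⟨k, hkl⟩ with hkl_def
    set kt : Fin t := ⟨k, hkt⟩ with hkt_def
    -- splitting of the filtered sum
    have hfe : (Finset.univ.filter (fun i : Fin l => k ≤ (i : ℕ)))
        = insert kl (Finset.univ.filter (fun i : Fin l => k + 1 ≤ (i : ℕ))) := by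
      ext i
      simp only [Finset.mem_filter, Finset.mem_univ, true_and, Finset.mem_insert, Fin.ext_iff, hkl_def, Fin.val_mk]
      omega
    have hnotmem : kl ∉ Finset.univ.filter (fun i : Fin l => k + 1 ≤ (i : ℕ)) := by
      simp [hkl_def]
    have hsplit : ∀ f : Fin l → ℝ,
        ∑ i ∈ Finset.univ.filter (fun i : Fin l => k ≤ (i : ℕ)), f i
          = f kl + ∑ i ∈ Finset.univ.filter (fun i : Fin l => k + 1 ≤ (i : ℕ)), f i := by
      intro f; rw [hfe, Finset.sum_insert hnotmem]
    -- below-pivot entries in column kt are nonpositive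
    have hbelow : ∀ i : Fin l, k < (i : ℕ) → S i kt ≤ 0 := fun i hi =>
      ho i kt (by simp [hkt_def]; omega)
    have hBle : ∑ i ∈ Finset.univ.filter (fun i : Fin l => k + 1 ≤ (i : ℕ)), S i kt ≤ 0 :=
      Finset.sum_nonpos (fun i hi => hbelow i (by simpa using (Finset.mem_filter.mp hi).2))
    have hApos : 0 ≤ S kl kt + ∑ i ∈ Finset.univ.filter (fun i : Fin l => k + 1 ≤ (i : ℕ)), S i kt := by
      have := hs kt; rwa [hsplit (fun i => S i kt)] at this
    have hp0 : 0 ≤ S kl kt := by linarith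
    by_cases hp : S kl kt = 0
    · -- zero pivot: whole column below is zero, no operation
      have hzcol : ∀ i : Fin l, k ≤ (i : ℕ) → S i kt = 0 := by
        have hsum0 : ∑ i ∈ Finset.univ.filter (fun i : Fin l => k + 1 ≤ (i : ℕ)), S i kt = 0 := by
          linarith [hApos, hBle]
        intro i hi
        rcases eq_or_lt_of_le hi with hik | hik
        · have : i = kl := by apply Fin.ext; simp [hkl_def]; omega
          rw [this, hp]
        · exact (Finset.sum_eq_zero_iff_of_nonpos (fun j hj =>
            hbelow j (by simpa using (Finset.mem_filter.mp hj).2))).mp hsum0 i (by simp; omega)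
      refine ⟨Y, S, hYS, hY, ?_, ho, ?_, ?_, ?_, ?_⟩
      · intro i j hj hji
        rcases Nat.lt_or_ge (j : ℕ) k with hjk | hjk
        · exact hz i j hjk hji
        · have : (j : ℕ) = k := by omega
          have hj' : j = kt := by apply Fin.ext; simp [hkt_def, this]
          rw [hj']; exact hzcol i (by omega)
      · intro j
        have := hs j
        rw [hsplit (fun i => S i j)] at this
        rcases eq_or_ne ((j : ℕ)) k with hjk | hjk
        · have hj' : j = kt := by apply Fin.ext; simp [hkt_def, hjk]
          apply Finset.sum_nonneg
          intro i hi
          rw [hj', hzcol i (by simpa using le_of_lt (Nat.lt_of_succ_le (Finset.mem_filter.mp hi).2))]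
        · have hklj : S kl j ≤ 0 := ho kl j (by simp [hkl_def]; omega)
          linarith
      · intro i j hj hji; exact hT i j (by omega) hji
      · intro m hm hml hmt
        rcases Nat.lt_or_ge m k with hmk | hmk
        · exact hd m hmk hml hmt
        · have : m = k := by omega
          subst this
          left
          have h1' : (⟨m, hml⟩ : Fin l) = kl := rfl
          have h2' : (⟨m, hmt⟩ : Fin t) = kt := rfl
          rw [h1', h2', hp]
      · intro m hm i hmt hmi hTik hml
        rcases Nat.lt_or_ge m k with hmk | hmk
        · exact h1 m hmk i hmt hmi hTik hml
        · exfalso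
          have : m = k := by omega
          subst this
          have h2' : (⟨m, hmt⟩ : Fin t) = kt := rfl
          rw [h2'] at hTik
          have := hT i kt (le_rfl) hmi
          have := hzcol i (le_of_lt hmi)
          linarith
    · -- positive pivot
      have hppos : 0 < S kl kt := lt_of_le_of_ne hp0 (Ne.symm hp)
      set p : ℝ := S kl kt with hpdef
      set Y' : Matrix (Fin l) (Fin l) ℝ := fun i j =>
        if (i : ℕ) = k then Y i j / p
        else if k < (i : ℕ) then Y i j - S i kt / p * Y kl j
        else Y i j with hY'def
      set S' : Matrix (Fin l) (Fin t) ℝ := fun i j =>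
        if (i : ℕ) = k then S i j / p
        else if k < (i : ℕ) then S i j - S i kt / p * S kl j
        else S i j with hS'def
      have hSapp : ∀ i j, S i j = ∑ r, Y i r * T r j := by
        intro i j; rw [hYS, Matrix.mul_apply]
      have hik_eq : ∀ i : Fin l, (i : ℕ) = k → i = kl := by
        intro i hi; apply Fin.ext; simpa [hkl_def] using hi
      have hmul : S' = Y' * T := by
        ext i j
        rw [Matrix.mul_apply]
        simp only [hS'def, hY'def]
        by_cases hik : (i : ℕ) = k
        · simp only [if_pos hik]
          rw [hSapp i j, Finset.sum_div]
          exact Finset.sum_congr rfl (fun r _ => by ring)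
        · simp only [if_neg hik]
          by_cases hki : k < (i : ℕ)
          · simp only [if_pos hki]
            rw [hSapp i j, hSapp kl j, Finset.mul_sum, ← Finset.sum_sub_distrib]
            exact Finset.sum_congr rfl (fun r _ => by ring)
          · simp only [if_neg hki]
            exact hSapp i j
      have hY' : ∀ i j, 0 ≤ Y' i j := by
        intro i j
        simp only [hY'def]
        by_cases hik : (i : ℕ) = k
        · simp only [if_pos hik]
          exact div_nonneg (hY i j) (le_of_lt hppos)
        · simp only [if_neg hik]
          by_cases hki : k < (i : ℕ)
          · simp only [if_pos hki]
            have h1' : S i kt / p ≤ 0 := div_nonpos_of_nonpos_of_nonneg (hbelow i hki) (le_of_lt hppos)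
            have := mul_nonpos_of_nonpos_of_nonneg h1' (hY kl j)
            linarith [hY i j]
          · simp only [if_neg hki]
            exact hY i j
      -- key cancellations
      have hcancel : ∀ i : Fin l, k < (i : ℕ) → S' i kt = 0 := by
        intro i hi
        simp only [hS'def, if_neg (by omega : ¬ (i : ℕ) = k), if_pos hi]
        field_simp
        rw [← hpdef]; ring
      have hrowk : ∀ j, S' kl j = S kl j / p := by
        intro j; simp [hS'def, hkl_def]
      have hrowlt : ∀ (i : Fin l) j, (i : ℕ) < k → S' i j = S i j := by
        intro i j hi
        simp only [hS'def, if_neg (by omega : ¬ (i : ℕ) = k), if_neg (by omega : ¬ k < (i : ℕ))]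
      have hrowgt : ∀ (i : Fin l) j, k < (i : ℕ) → S' i j = S i j - S i kt / p * S kl j := by
        intro i j hi
        simp only [hS'def, if_neg (by omega : ¬ (i : ℕ) = k), if_pos hi]
      refine ⟨Y', S', hmul, hY', ?_, ?_, ?_, ?_, ?_, ?_⟩
      · -- zeros below diagonal in columns < k+1
        intro i j hj hji
        rcases Nat.lt_or_ge (j : ℕ) k with hjk | hjk
        · rcases Nat.lt_trichotomy ((i : ℕ)) k with hik | hik | hik
          · rw [hrowlt i j hik]; exact hz i j hjk hji
          · rw [hik_eq i hik, hrowk j, hz kl j hjk (by simp [hkl_def]; omega)]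
            simp
          · rw [hrowgt i j hik, hz i j hjk hji, hz kl j hjk (by simp [hkl_def]; omega)]
            ring
        · have hjek : (j : ℕ) = k := by omega
          have hj' : j = kt := by apply Fin.ext; simp [hkt_def, hjek]
          rw [hj']
          exact hcancel i (by omega)
      · -- off-diagonal nonpositive
        intro i j hij
        rcases Nat.lt_trichotomy ((i : ℕ)) k with hik | hik | hik
        · rw [hrowlt i j hik]; exact ho i j hij
        · rw [hik_eq i hik, hrowk j]
          have : S kl j ≤ 0 := ho kl j (by simp [hkl_def]; omega)
          exact div_nonpos_of_nonpos_of_nonneg this (le_of_lt hppos)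
        · rcases eq_or_ne ((j : ℕ)) k with hjk | hjk
          · have hj' : j = kt := by apply Fin.ext; simp [hkt_def, hjk]
            rw [hj', hcancel i hik]
          · rw [hrowgt i j hik]
            have h1' : S i j ≤ 0 := ho i j hij
            have h2' : S i kt ≤ 0 := hbelow i hik
            have h3' : S kl j ≤ 0 := ho kl j (by simp [hkl_def]; omega)
            have h4' : 0 ≤ S i kt / p * S kl j := by
              have := div_nonpos_of_nonpos_of_nonneg h2' (le_of_lt hppos)
              nlinarith
            linarith
      · -- partial column sums nonnegative
        intro j
        have hmem : ∀ i ∈ Finset.univ.filter (fun i : Fin l => k + 1 ≤ (i : ℕ)), k < (i : ℕ) :=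
          fun i hi => by simpa using (Finset.mem_filter.mp hi).2
        rcases eq_or_ne ((j : ℕ)) k with hjk | hjk
        · have hj' : j = kt := by apply Fin.ext; simp [hkt_def, hjk]
          apply Finset.sum_nonneg
          intro i hi
          rw [hj', hcancel i (hmem i hi)]
        · have hrw : ∑ i ∈ Finset.univ.filter (fun i : Fin l => k + 1 ≤ (i : ℕ)), S' i j
              = (∑ i ∈ Finset.univ.filter (fun i : Fin l => k + 1 ≤ (i : ℕ)), S i j)
                - (∑ i ∈ Finset.univ.filter (fun i : Fin l => k + 1 ≤ (i : ℕ)), S i kt) / p * S kl j := by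
            rw [Finset.sum_div, Finset.sum_mul, ← Finset.sum_sub_distrib]
            exact Finset.sum_congr rfl (fun i hi => hrowgt i j (hmem i hi))
          rw [hrw]
          set Bj := ∑ i ∈ Finset.univ.filter (fun i : Fin l => k + 1 ≤ (i : ℕ)), S i j with hBj
          set Bk := ∑ i ∈ Finset.univ.filter (fun i : Fin l => k + 1 ≤ (i : ℕ)), S i kt with hBk
          have hAj : 0 ≤ S kl j + Bj := by
            have := hs j; rwa [hsplit (fun i => S i j)] at this
          have hklj : S kl j ≤ 0 := ho kl j (by simp [hkl_def]; omega)
          have hBkp : -p ≤ Bk := by linarith [hApos]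
          have hpc : Bk / p * p = Bk := div_mul_cancel₀ Bk (ne_of_gt hppos)
          nlinarith [mul_nonneg (le_of_lt hppos) (le_of_lt hppos),
            mul_le_mul_of_nonpos_right hBkp hklj]
      · -- S' ≤ T below diagonal in columns ≥ k+1
        intro i j hj hji
        have hik : k < (i : ℕ) := by omega
        rw [hrowgt i j hik]
        have h2' : S i kt ≤ 0 := hbelow i hik
        have h3' : S kl j ≤ 0 := ho kl j (by simp [hkl_def]; omega)
        have h4' : 0 ≤ S i kt / p * S kl j := by
          have := div_nonpos_of_nonpos_of_nonneg h2' (le_of_lt hppos)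
          nlinarith
        have := hT i j (by omega) hji
        linarith
      · -- diagonal entries 0 or 1
        intro m hm hml hmt
        rcases Nat.lt_or_ge m k with hmk | hmk
        · rw [hrowlt ⟨m, hml⟩ ⟨m, hmt⟩ hmk]; exact hd m hmk hml hmt
        · have : m = k := by omega
          subst this
          right
          have h1' : (⟨m, hml⟩ : Fin l) = kl := rfl
          have h2' : (⟨m, hmt⟩ : Fin t) = kt := rfl
          rw [h1', h2', hrowk kt]
          exact div_self (ne_of_gt hppos)
      · -- ones on the diagonal where forced
        intro m hm i hmt hmi hTik hml
        rcases Nat.lt_or_ge m k with hmk | hmk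
        · rw [hrowlt ⟨m, hml⟩ ⟨m, hmt⟩ hmk]; exact h1 m hmk i hmt hmi hTik hml
        · have : m = k := by omega
          subst this
          have h1' : (⟨m, hml⟩ : Fin l) = kl := rfl
          have h2' : (⟨m, hmt⟩ : Fin t) = kt := rfl
          rw [h1', h2', hrowk kt]
          exact div_self (ne_of_gt hppos)
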